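/- Exchange property for independent sets: In any matroid, for any two independent sets A and B and for any partition of A into two disjoint parts X₁ and Y₁, there exists a partition of B into two disjoint parts X₂ and Y₂ such that both X₁ ∪ Y₂ and X₂ ∪ Y₁ are independent. -/

import Mathlib

/-- A matroid on a finite ground set, given by its family of independent sets:
nonempty (contains `∅`), downward-closed, and satisfying the augmentation property. -/
structure FinMatroid (V : Type*) [DecidableEq V] where
  Indep : Finset V → Prop
  empty_indep : Indep ∅
  subset_indep : ∀ ⦃A B : Finset V⦄, A ⊆ B → Indep B → Indep A
  augment : ∀ ⦃A B : Finset V⦄, Indep A → Indep B → A.card < B.card →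
    ∃ e ∈ B, e ∉ A ∧ Indep (insert e A)

namespace FinMatroidAux

open Finset

variable {V : Type*} [DecidableEq V]

/-- There is a maximum-cardinality independent subset of any finite set. -/
lemma exists_max_indep (M : FinMatroid V) (S : Finset V) :
    ∃ J, J ⊆ S ∧ M.Indep J ∧ ∀ K, K ⊆ S → M.Indep K → K.card ≤ J.card := by
  classical
  obtain ⟨J, hJmem, hJmax⟩ :=
    (S.powerset.filter fun T => M.Indep T).exists_max_image Finset.card
      ⟨∅, by simp [M.empty_indep]⟩
  simp only [mem_filter, mem_powerset] at hJmem
  exact ⟨J, hJmem.1, hJmem.2, fun K h1 h2 =>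
    hJmax K (by simp [mem_filter, mem_powerset, h1, h2])⟩

/-- The rank of a finite set: the size of a maximum independent subset. -/
noncomputable def rk (M : FinMatroid V) (S : Finset V) : ℕ :=
  (exists_max_indep M S).choose.card

lemma rk_witness (M : FinMatroid V) (S : Finset V) :
    ∃ J, J ⊆ S ∧ M.Indep J ∧ J.card = rk M S := by
  obtain ⟨h1, h2, _⟩ := (exists_max_indep M S).choose_spec
  exact ⟨_, h1, h2, rfl⟩

lemma le_rk (M : FinMatroid V) {S K : Finset V} (h1 : K ⊆ S) (h2 : M.Indep K) :
    K.card ≤ rk M S :=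
  (exists_max_indep M S).choose_spec.2.2 K h1 h2

lemma rk_le_card (M : FinMatroid V) (S : Finset V) : rk M S ≤ S.card := by
  obtain ⟨J, hJS, _, hJc⟩ := rk_witness M S
  exact hJc ▸ card_le_card hJS

lemma rk_empty (M : FinMatroid V) : rk M ∅ = 0 :=
  Nat.le_zero.mp (by simpa using rk_le_card M ∅)

/-- Any independent subset extends to a maximum-cardinality independent subset. -/
lemma exists_extend (M : FinMatroid V) {I S : Finset V} (hIS : I ⊆ S) (hI : M.Indep I) :
    ∃ J, I ⊆ J ∧ J ⊆ S ∧ M.Indep J ∧ J.card = rk M S := by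
  classical
  obtain ⟨J, hJmem, hJmax⟩ :=
    (S.powerset.filter fun T => M.Indep T ∧ I ⊆ T).exists_max_image Finset.card
      ⟨I, by simp [mem_filter, mem_powerset, hIS, hI]⟩
  simp only [mem_filter, mem_powerset] at hJmem
  obtain ⟨hJS, hJind, hIJ⟩ := hJmem
  refine ⟨J, hIJ, hJS, hJind, le_antisymm (le_rk M hJS hJind) ?_⟩
  by_contra hlt
  push_neg at hlt
  obtain ⟨K, hKS, hKind, hKc⟩ := rk_witness M S
  obtain ⟨e, heK, heJ, hins⟩ := M.augment hJind hKind (hKc ▸ hlt)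
  have hmem : insert e J ∈ (S.powerset.filter fun T => M.Indep T ∧ I ⊆ T) := by
    simp only [mem_filter, mem_powerset]
    exact ⟨insert_subset (hKS heK) hJS, hins, hIJ.trans (subset_insert _ _)⟩
  have := hJmax _ hmem
  simp [card_insert_of_notMem heJ] at this

/-- Submodularity of the rank function. -/
lemma rk_submod (M : FinMatroid V) (S T : Finset V) :
    rk M (S ∪ T) + rk M (S ∩ T) ≤ rk M S + rk M T := by
  obtain ⟨Jn, hJn, hJnind, hJnc⟩ := rk_witness M (S ∩ T)
  obtain ⟨K, hJnK, hKST, hKind, hKc⟩ :=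
    exists_extend M (hJn.trans (inter_subset_left.trans subset_union_left)) hJnind
  have h1 : (K ∩ S).card ≤ rk M S :=
    le_rk M inter_subset_right (M.subset_indep inter_subset_left hKind)
  have h2 : (K ∩ T).card ≤ rk M T :=
    le_rk M inter_subset_right (M.subset_indep inter_subset_left hKind)
  have hu : (K ∩ S) ∪ (K ∩ T) = K := by
    rw [← inter_union_distrib_left, inter_eq_left.mpr hKST]
  have hi : (K ∩ S) ∩ (K ∩ T) = K ∩ (S ∩ T) := by
    ext x; simp; tauto
  have hcards := card_union_add_card_inter (K ∩ S) (K ∩ T)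
  rw [hu, hi] at hcards
  have hJnsub : Jn ⊆ K ∩ (S ∩ T) := subset_inter hJnK hJn
  have := card_le_card hJnsub
  omega

/-- The contraction of a matroid by an independent set `P`:
independent sets are those `S` with `P ∪ S` independent in `M`. -/
def contractBy (M : FinMatroid V) (P : Finset V) (hP : M.Indep P) : FinMatroid V where
  Indep S := M.Indep (P ∪ S)
  empty_indep := by simpa using hP
  subset_indep := fun A B hAB hB => M.subset_indep (union_subset_union_right hAB) hB
  augment := by
    intro S T hS hT hlt
    by_cases hcase : ∃ e ∈ T ∩ P, e ∉ S
    · obtain ⟨e, heTP, heS⟩ := hcase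
      simp only [mem_inter] at heTP
      refine ⟨e, heTP.1, heS, ?_⟩
      have : P ∪ insert e S = P ∪ S := by
        ext x; simp only [mem_union, mem_insert]
        constructor
        · rintro (h | rfl | h)
          · exact Or.inl h
          · exact Or.inl heTP.2
          · exact Or.inr h
        · tauto
      show M.Indep (P ∪ insert e S)
      rwa [this]
    · push_neg at hcase
      have hTP : T ∩ P ⊆ S ∩ P := fun x hx => by
        simp only [mem_inter] at hx ⊢
        exact ⟨hcase x (mem_inter.mpr hx), hx.2⟩
      have hcard : (P ∪ S).card < (P ∪ T).card := by
        have e1 := card_union_add_card_inter P S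
        have e2 := card_union_add_card_inter P T
        rw [inter_comm P S] at e1
        rw [inter_comm P T] at e2
        have := card_le_card hTP
        omega
      obtain ⟨e, heT, heS, hins⟩ := M.augment hS hT hcard
      simp only [mem_union] at heT heS
      push_neg at heS
      refine ⟨e, ?_, heS.2, ?_⟩
      · rcases heT with h | h
        · exact absurd h heS.1
        · exact h
      · have : P ∪ insert e S = insert e (P ∪ S) := by
          ext x; simp only [mem_union, mem_insert]; tauto
        show M.Indep (P ∪ insert e S)
        rwa [this]

/-- Rank bound for the contraction. -/
lemma rk_contract (M : FinMatroid V) (P : Finset V) (hP : M.Indep P) (S : Finset V) :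
    rk M (P ∪ S) + (S ∩ P).card ≤ rk (contractBy M P hP) S + P.card := by
  obtain ⟨J, hPJ, hJPS, hJind, hJc⟩ :=
    exists_extend M (subset_union_left (s₂ := S)) hP
  set T₁ : Finset V := (J \ P) ∪ (S ∩ P) with hT₁
  have hT₁S : T₁ ⊆ S := by
    apply union_subset _ inter_subset_left
    intro x hx
    simp only [mem_sdiff] at hx
    rcases mem_union.mp (hJPS hx.1) with h | h
    · exact absurd h hx.2
    · exact h
  have hT₁ind : (contractBy M P hP).Indep T₁ := by
    show M.Indep (P ∪ T₁)
    have : P ∪ T₁ = J := by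
      rw [hT₁, ← union_assoc, union_sdiff_of_subset hPJ]
      exact union_eq_left.mpr (inter_subset_right.trans hPJ)
    rwa [this]
  have hle : T₁.card ≤ rk (contractBy M P hP) S := le_rk _ hT₁S hT₁ind
  have hdisj : Disjoint (J \ P) (S ∩ P) :=
    disjoint_left.mpr fun x hx hx' => (mem_sdiff.mp hx).2 (mem_inter.mp hx').2
  have hc1 : T₁.card = (J \ P).card + (S ∩ P).card := card_union_of_disjoint hdisj
  have hc2 : (J \ P).card + P.card = J.card := card_sdiff_add_card_eq_card hPJ
  omega

/-- A loop (a dependent singleton) never increases rank. -/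
lemma rk_insert_loop (M : FinMatroid V) {e : V} (h : ¬ M.Indep {e}) (S : Finset V) :
    rk M (insert e S) ≤ rk M S := by
  obtain ⟨J, hJS, hJind, hJc⟩ := rk_witness M (insert e S)
  have heJ : e ∉ J := fun he =>
    h (M.subset_indep (singleton_subset_iff.mpr he) hJind)
  have : J ⊆ S := fun x hx => by
    rcases mem_insert.mp (hJS hx) with rfl | h'
    · exact absurd hx heJ
    · exact h'
  exact hJc ▸ le_rk M this hJind

/-- One branch of the induction for the partition theorem. -/
lemma branch_aux (M₁ M₂ : FinMatroid V) (e : V) (E' : Finset V) (he : e ∉ E')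
    (IH : ∀ (N₁ N₂ : FinMatroid V),
      (∀ S ⊆ E', S.card ≤ rk N₁ S + rk N₂ S) →
      ∃ I₁ I₂, Disjoint I₁ I₂ ∧ I₁ ∪ I₂ = E' ∧ N₁.Indep I₁ ∧ N₂.Indep I₂) :
    (∃ I₁ I₂, Disjoint I₁ I₂ ∧ I₁ ∪ I₂ = insert e E' ∧ M₁.Indep I₁ ∧ M₂.Indep I₂) ∨
    (∃ S₁, S₁ ⊆ E' ∧ rk M₁ (insert e S₁) + rk M₂ S₁ ≤ S₁.card) := by
  by_cases h1 : M₁.Indep {e}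
  · by_cases h2 : ∀ S ⊆ E', S.card ≤ rk (contractBy M₁ {e} h1) S + rk M₂ S
    · left
      obtain ⟨I₁', I₂, hd, hu, hi1, hi2⟩ := IH _ _ h2
      have heI₂ : e ∉ I₂ := fun hmem => he (hu ▸ mem_union_right _ hmem)
      refine ⟨insert e I₁', I₂, ?_, ?_, ?_, hi2⟩
      · rw [disjoint_insert_left]; exact ⟨heI₂, hd⟩
      · rw [insert_union, hu]
      · have : ({e} : Finset V) ∪ I₁' = insert e I₁' := by
          ext x; simp [or_comm]
        exact this ▸ hi1
    · right
      push_neg at h2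
      obtain ⟨S₁, hS₁, hlt⟩ := h2
      have hint : S₁ ∩ {e} = ∅ := by
        ext x; simp only [mem_inter, mem_singleton, notMem_empty, iff_false]
        rintro ⟨hx, rfl⟩; exact he (hS₁ hx)
      have := rk_contract M₁ {e} h1 S₁
      rw [hint] at this
      simp only [card_empty, card_singleton] at this
      have hins : ({e} : Finset V) ∪ S₁ = insert e S₁ := by
        ext x; simp [or_comm]
      rw [hins] at this
      exact ⟨S₁, hS₁, by omega⟩
  · right
    refine ⟨∅, empty_subset _, ?_⟩
    have h0 : rk M₁ (insert e ∅) ≤ rk M₁ ∅ := rk_insert_loop M₁ h1 ∅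
    simp only [rk_empty] at h0 ⊢
    omega

/-- The matroid partition (union) theorem for two matroids. -/
lemma partition_two : ∀ (n : ℕ) (M₁ M₂ : FinMatroid V) (E : Finset V), E.card = n →
    (∀ S ⊆ E, S.card ≤ rk M₁ S + rk M₂ S) →
    ∃ I₁ I₂, Disjoint I₁ I₂ ∧ I₁ ∪ I₂ = E ∧ M₁.Indep I₁ ∧ M₂.Indep I₂ := by
  intro n
  induction n using Nat.strong_induction_on with
  | _ n IHn =>
    intro M₁ M₂ E hcard h
    rcases E.eq_empty_or_nonempty with rfl | ⟨e, he⟩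
    · exact ⟨∅, ∅, disjoint_empty_left _, by simp, M₁.empty_indep, M₂.empty_indep⟩
    · set E' := E.erase e with hE'
      have heE' : e ∉ E' := notMem_erase e E
      have hEeq : insert e E' = E := insert_erase he
      have hcard' : E'.card < n := by
        rw [← hcard]; exact card_erase_lt_of_mem he
      have hsub : E' ⊆ E := erase_subset e E
      have IH : ∀ (N₁ N₂ : FinMatroid V),
          (∀ S ⊆ E', S.card ≤ rk N₁ S + rk N₂ S) →
          ∃ I₁ I₂, Disjoint I₁ I₂ ∧ I₁ ∪ I₂ = E' ∧ N₁.Indep I₁ ∧ N₂.Indep I₂ :=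
        fun N₁ N₂ hcond => IHn E'.card hcard' N₁ N₂ E' rfl hcond
      rcases branch_aux M₁ M₂ e E' heE' IH with hdone | ⟨S₁, hS₁, key1⟩
      · rw [hEeq] at hdone; exact hdone
      rcases branch_aux M₂ M₁ e E' heE'
          (fun N₁ N₂ hcond => by
            obtain ⟨I₁, I₂, hd, hu, h1, h2⟩ := IH N₂ N₁
              (fun S hS => by rw [Nat.add_comm]; exact hcond S hS)
            exact ⟨I₂, I₁, hd.symm, by rw [union_comm]; exact hu, h2, h1⟩)
          with hdone | ⟨S₂, hS₂, key2⟩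
      · obtain ⟨I₁, I₂, hd, hu, h1, h2⟩ := hdone
        rw [hEeq] at hu
        exact ⟨I₂, I₁, hd.symm, by rw [union_comm]; exact hu, h2, h1⟩
      · exfalso
        have heS₁ : e ∉ S₁ := fun hx => heE' (hS₁ hx)
        have heS₂ : e ∉ S₂ := fun hx => heE' (hS₂ hx)
        have hTE : insert e (S₁ ∪ S₂) ⊆ E := by
          rw [← hEeq]
          exact insert_subset_insert _ (union_subset hS₁ hS₂)
        have hNE : S₁ ∩ S₂ ⊆ E := (inter_subset_left.trans hS₁).trans hsub
        have hhT := h (insert e (S₁ ∪ S₂)) hTE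
        have hhN := h (S₁ ∩ S₂) hNE
        have hsub1 := rk_submod M₁ (insert e S₁) S₂
        rw [insert_union, insert_inter_of_notMem heS₂] at hsub1
        have hsub2 := rk_submod M₂ S₁ (insert e S₂)
        rw [union_insert, inter_insert_of_notMem heS₁] at hsub2
        have hTc : (insert e (S₁ ∪ S₂)).card = (S₁ ∪ S₂).card + 1 :=
          card_insert_of_notMem (by simp [heS₁, heS₂])
        have hcui := card_union_add_card_inter S₁ S₂
        omega

end FinMatroidAux

/-- Exchange property for independent sets: for any two independent sets `A`, `B` and any
partition of `A` into disjoint parts `X₁`, `Y₁`, there is a partition of `B` into disjoint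
parts `X₂`, `Y₂` such that both `X₁ ∪ Y₂` and `X₂ ∪ Y₁` are independent. -/
theorem indep_partition_exchange {V : Type*} [DecidableEq V] [Fintype V]
    (M : FinMatroid V) (A B X₁ Y₁ : Finset V)
    (hA : M.Indep A) (hB : M.Indep B)
    (hdisj : Disjoint X₁ Y₁) (hpart : X₁ ∪ Y₁ = A) :
    ∃ X₂ Y₂ : Finset V, Disjoint X₂ Y₂ ∧ X₂ ∪ Y₂ = B ∧
      M.Indep (X₁ ∪ Y₂) ∧ M.Indep (X₂ ∪ Y₁) := by
  open Finset FinMatroidAux in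
  have hX₁ : M.Indep X₁ := M.subset_indep (hpart ▸ subset_union_left) hA
  have hY₁ : M.Indep Y₁ := M.subset_indep (hpart ▸ subset_union_right) hA
  have hcond : ∀ S ⊆ B,
      S.card ≤ rk (contractBy M X₁ hX₁) S + rk (contractBy M Y₁ hY₁) S := by
    intro S hS
    have hSind : M.Indep S := M.subset_indep hS hB
    have e1 := rk_contract M X₁ hX₁ S
    have e2 := rk_contract M Y₁ hY₁ S
    have e3 := rk_submod M (X₁ ∪ S) (Y₁ ∪ S)
    have e4 : A.card ≤ rk M ((X₁ ∪ S) ∪ (Y₁ ∪ S)) := by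
      apply le_rk M _ hA
      rw [← hpart]
      exact union_subset (subset_union_left.trans subset_union_left)
        (subset_union_left.trans subset_union_right)
    have e5 : S.card ≤ rk M ((X₁ ∪ S) ∩ (Y₁ ∪ S)) := by
      apply le_rk M _ hSind
      exact subset_inter subset_union_right subset_union_right
    have e6 : A.card = X₁.card + Y₁.card := by
      rw [← hpart]; exact card_union_of_disjoint hdisj
    have e7 : (S ∩ X₁).card + (S ∩ Y₁).card ≥ 0 := Nat.zero_le _
    omega
  obtain ⟨I₁, I₂, hd, hu, h1, h2⟩ :=
    partition_two B.card (contractBy M X₁ hX₁) (contractBy M Y₁ hY₁) B rfl hcond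
  refine ⟨I₂, I₁, hd.symm, by rw [union_comm]; exact hu, h1, ?_⟩
  have : Y₁ ∪ I₂ = I₂ ∪ Y₁ := union_comm _ _
  exact this ▸ h2
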